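/- There exists an infinite binary word that contains no factor of the form g(x)·x·x·g(x) for any nonempty binary word x and any antimorphic involution g of {0,1}* (reversal or reverse complement). -/

import Mathlib

/-- `L` is a factor of the infinite word `w : ℕ → Bool`. -/
def IsFactorOf (w : Nat → Bool) (L : List Bool) : Prop :=
  ∃ k, L = (List.range L.length).map (fun j => w (k + j))

/-- The period word. -/
def Wl : List Bool :=
  [false, false, false, true, false, false, false, true, false, true, false, true, true, true]

/-- The periodic word read on residues mod 14. -/
def fR (r : ZMod 14) : Bool := Wl.getD r.val false

lemma bigFact : ∀ cpl : Bool,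
    ∀ c : ZMod 14, ∃ r : ZMod 14, fR r ≠ cond cpl (!fR (c - r)) (fR (c - r)) := by decide

lemma smallFact :
    ∀ K : ZMod 14, ∀ n : ℕ, n < 14 → 1 ≤ n → ∀ cpl : Bool, ∃ j < n,
      fR (K + (j : ZMod 14)) ≠
          cond cpl (!fR (K + 2 * (n : ZMod 14) - 1 - (j : ZMod 14)))
            (fR (K + 2 * (n : ZMod 14) - 1 - (j : ZMod 14))) ∨
      fR (K + (n : ZMod 14) + (j : ZMod 14)) ≠ fR (K + 2 * (n : ZMod 14) + (j : ZMod 14)) ∨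
      fR (K + 3 * (n : ZMod 14) + (j : ZMod 14)) ≠
          cond cpl (!fR (K + 2 * (n : ZMod 14) - 1 - (j : ZMod 14)))
            (fR (K + 2 * (n : ZMod 14) - 1 - (j : ZMod 14))) := by decide

theorem stmt18 :
    ∃ w : Nat → Bool, ∀ (x : List Bool) (g : List Bool → List Bool),
      x ≠ [] → ((∀ l, g l = l.reverse) ∨ (∀ l, g l = (l.map (fun b => !b)).reverse)) →
      ¬ IsFactorOf w (g x ++ x ++ x ++ g x) := by
  refine ⟨fun i => fR (i : ZMod 14), ?_⟩
  intro x g hx hg ⟨k, hk⟩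
  set n := x.length with hn
  have hn1 : 1 ≤ n := List.length_pos_iff.mpr hx
  have hglen : (g x).length = n := by
    rcases hg with h | h <;> simp [h, hn]
  have hlen : (g x ++ x ++ x ++ g x).length = 4 * n := by
    simp [hglen, ← hn]; omega
  have key : ∀ j, j < 4 * n →
      (g x ++ x ++ x ++ g x)[j]? = some (fR ((k + j : ℕ) : ZMod 14)) := by
    intro j hj
    conv_lhs => rw [hk]
    rw [List.getElem?_map, List.getElem?_range (by rw [hlen]; exact hj)]
    rfl
  -- block equations
  have hA : ∀ j, j < n → (g x)[j]? = some (fR ((k + j : ℕ) : ZMod 14)) := by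
    intro j hj
    have := key j (by omega)
    rwa [List.getElem?_append_left (by simp only [List.length_append, hglen, ← hn]; omega),
      List.getElem?_append_left (by simp only [List.length_append, hglen, ← hn]; omega),
      List.getElem?_append_left (by simp only [List.length_append, hglen, ← hn]; omega)] at this
  have hx1 : ∀ j, j < n → x[j]? = some (fR ((k + (n + j) : ℕ) : ZMod 14)) := by
    intro j hj
    have := key (n + j) (by omega)
    rw [List.getElem?_append_left (by simp only [List.length_append, hglen, ← hn]; omega),
      List.getElem?_append_left (by simp only [List.length_append, hglen, ← hn]; omega),
      List.getElem?_append_right (by simp only [List.length_append, hglen, ← hn]; omega)] at this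
    have e : n + j - (g x).length = j := by rw [hglen]; omega
    rwa [e] at this
  have hx2 : ∀ j, j < n → x[j]? = some (fR ((k + (2 * n + j) : ℕ) : ZMod 14)) := by
    intro j hj
    have := key (2 * n + j) (by omega)
    rw [List.getElem?_append_left (by simp only [List.length_append, hglen, ← hn]; omega),
      List.getElem?_append_right (by simp only [List.length_append, hglen, ← hn]; omega)] at this
    have e : 2 * n + j - (g x ++ x).length = j := by simp only [List.length_append, hglen, ← hn]; omega
    rwa [e] at this
  have hA2 : ∀ j, j < n → (g x)[j]? = some (fR ((k + (3 * n + j) : ℕ) : ZMod 14)) := by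
    intro j hj
    have := key (3 * n + j) (by omega)
    rw [List.getElem?_append_right (by simp only [List.length_append, hglen, ← hn]; omega)] at this
    have e : 3 * n + j - (g x ++ x ++ x).length = j := by simp only [List.length_append, hglen, ← hn]; omega
    rwa [e] at this
  -- unified description of g
  obtain ⟨cpl, hgx⟩ : ∃ cpl : Bool, ∀ j, j < n →
      (g x)[j]? = (x[n - 1 - j]?).map (fun b => cond cpl (!b) b) := by
    rcases hg with h | h
    · refine ⟨false, fun j hj => ?_⟩
      rw [h, List.getElem?_reverse (by omega)]
      simp [← hn]
    · refine ⟨true, fun j hj => ?_⟩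
      rw [h, List.getElem?_reverse (by simp; omega)]
      simp [← hn]
  -- key pointwise equalities on fR
  have Aeq : ∀ j, j < n →
      fR ((k + j : ℕ) : ZMod 14) =
        cond cpl (!fR ((k + (n + (n - 1 - j)) : ℕ) : ZMod 14))
          (fR ((k + (n + (n - 1 - j)) : ℕ) : ZMod 14)) := by
    intro j hj
    have h1 := hA j hj
    have h2 := hgx j hj
    have h3 := hx1 (n - 1 - j) (by omega)
    rw [h1, h3] at h2
    cases cpl <;> simpa using h2
  have Ceq : ∀ j, j < n →
      fR ((k + (3 * n + j) : ℕ) : ZMod 14) =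
        cond cpl (!fR ((k + (n + (n - 1 - j)) : ℕ) : ZMod 14))
          (fR ((k + (n + (n - 1 - j)) : ℕ) : ZMod 14)) := by
    intro j hj
    have h1 := hA2 j hj
    have h2 := hgx j hj
    have h3 := hx1 (n - 1 - j) (by omega)
    rw [h1, h3] at h2
    cases cpl <;> simpa using h2
  have Beq : ∀ j, j < n →
      fR ((k + (n + j) : ℕ) : ZMod 14) = fR ((k + (2 * n + j) : ℕ) : ZMod 14) := by
    intro j hj
    have h1 := hx1 j hj
    have h2 := hx2 j hj
    rw [h1] at h2
    simpa using h2
  -- cast computations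
  have cast1 : ∀ j, j < n → ((k + (n + (n - 1 - j)) : ℕ) : ZMod 14) =
      (k : ZMod 14) + 2 * (n : ZMod 14) - 1 - (j : ZMod 14) := by
    intro j hj
    have e : k + (n + (n - 1 - j)) + j + 1 = k + 2 * n := by omega
    have e2 := congrArg (Nat.cast : ℕ → ZMod 14) e
    push_cast at e2 ⊢
    linear_combination e2
  by_cases hbig : 14 ≤ n
  · -- large x: use reflection asymmetry
    obtain ⟨r, hr⟩ := bigFact cpl (2 * (k : ZMod 14) + 2 * (n : ZMod 14) - 1)
    set j := (r - (k : ZMod 14)).val with hjdef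
    have hj14 : j < 14 := ZMod.val_lt _
    have hjn : j < n := lt_of_lt_of_le hj14 hbig
    have hjr : ((j : ℕ) : ZMod 14) = r - (k : ZMod 14) := ZMod.natCast_zmod_val _
    have h1 := Aeq j hjn
    have e1 : ((k + j : ℕ) : ZMod 14) = r := by push_cast [hjr]; ring
    have e2 : ((k + (n + (n - 1 - j)) : ℕ) : ZMod 14) =
        2 * (k : ZMod 14) + 2 * (n : ZMod 14) - 1 - r := by
      rw [cast1 j hjn, hjr]; ring
    rw [e1, e2] at h1
    exact hr h1
  · -- small x: finite check
    obtain ⟨j, hjn, H⟩ := smallFact (k : ZMod 14) n (by omega) hn1 cpl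
    have e0 : ((k + j : ℕ) : ZMod 14) = (k : ZMod 14) + (j : ZMod 14) := by push_cast; ring
    have e1 : ((k + (n + j) : ℕ) : ZMod 14) =
        (k : ZMod 14) + (n : ZMod 14) + (j : ZMod 14) := by push_cast; ring
    have e2 : ((k + (2 * n + j) : ℕ) : ZMod 14) =
        (k : ZMod 14) + 2 * (n : ZMod 14) + (j : ZMod 14) := by push_cast; ring
    have e3 : ((k + (3 * n + j) : ℕ) : ZMod 14) =
        (k : ZMod 14) + 3 * (n : ZMod 14) + (j : ZMod 14) := by push_cast; ring
    rcases H with H | H | H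
    · have := Aeq j hjn
      rw [cast1 j hjn, e0] at this
      exact H this
    · have := Beq j hjn
      rw [e1, e2] at this
      exact H this
    · have := Ceq j hjn
      rw [cast1 j hjn, e3] at this
      exact H this
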